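/- Let A be a finite-dimensional algebra, M an indecomposable A-module with minimal projective resolution P• → M, and m ≥ 1. Then the brutal truncation τ^{≥−m}P• (the complex P^{-m} → ⋯ → P^{-1} → P^0 placed in degrees −m,…,0) is homotopically minimal and indecomposable in the category of bounded complexes of projective modules. -/

import Mathlib

open CategoryTheory CategoryTheory.Limits

/-- The radical of a module: `rad(A) • M`. -/
def radSubmodule (A : Type) [Ring A] (M : Type) [AddCommGroup M] [Module A M] :
    Submodule A M :=
  ((⊥ : Ideal A).jacobson) • (⊤ : Submodule A M)

section Helpers

variable {A : Type} [Ring A]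

lemma radSubmodule_map {M N : Type} [AddCommGroup M] [Module A M] [AddCommGroup N] [Module A N]
    (f : M →ₗ[A] N) {x : M} (hx : x ∈ radSubmodule A M) : f x ∈ radSubmodule A N := by
  refine Submodule.smul_induction_on hx (fun r hr n _ => ?_) (fun a b ha hb => ?_)
  · rw [map_smul]
    exact Submodule.smul_mem_smul hr Submodule.mem_top
  · rw [map_add]
    exact Submodule.add_mem _ ha hb

lemma subsingleton_of_rad {M : Type} [AddCommGroup M] [Module A M] [Module.Finite A M]
    (h : ∀ x : M, x ∈ radSubmodule A M) : Subsingleton M := by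
  classical
  -- elements of `J • span {x}` have the form `c • x` with `c ∈ J`
  have hform : ∀ x y : M, y ∈ ((⊥ : Ideal A).jacobson) • (Submodule.span A {x}) →
      ∃ c ∈ (⊥ : Ideal A).jacobson, y = c • x := by
    intro x y hy
    refine Submodule.smul_induction_on hy ?_ ?_
    · intro a ha z hz
      obtain ⟨b, hb⟩ := Submodule.mem_span_singleton.mp hz
      refine ⟨a * b, ?_, ?_⟩
      · exact Ideal.mul_mem_right _ _ ha
      · rw [← hb, smul_smul]
    · rintro y1 y2 ⟨c1, hc1, rfl⟩ ⟨c2, hc2, rfl⟩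
      exact ⟨c1 + c2, Ideal.add_mem _ hc1 hc2, (add_smul c1 c2 x).symm⟩
  -- Nakayama, by induction on the number of generators
  have key : ∀ (n : ℕ) (s : Finset M), s.card ≤ n →
      Submodule.span A (s : Set M) = ⊤ → (⊤ : Submodule A M) = ⊥ := by
    intro n
    induction n with
    | zero =>
      intro s hcard hspan
      have hs : s = ∅ := Finset.card_eq_zero.mp (Nat.le_zero.mp hcard)
      rw [hs, Finset.coe_empty, Submodule.span_empty] at hspan
      exact hspan.symm
    | succ n ih =>
      intro s hcard hspan
      rcases s.eq_empty_or_nonempty with hs | ⟨x, hx⟩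
      · rw [hs, Finset.coe_empty, Submodule.span_empty] at hspan
        exact hspan.symm
      · set N := Submodule.span A ((s.erase x : Finset M) : Set M) with hN
        have htop' : (⊤ : Submodule A M) = N ⊔ Submodule.span A {x} := by
          rw [← hspan, ← Submodule.span_union]
          congr 1
          rw [Finset.coe_erase, Set.diff_union_self]
          exact (Set.union_eq_self_of_subset_right (by simpa using hx)).symm
        have hxN : x ∈ N := by
          have h1 : x ∈ ((⊥ : Ideal A).jacobson) • (⊤ : Submodule A M) := h x
          rw [htop', Submodule.smul_sup] at h1
          have h2 : x ∈ N ⊔ ((⊥ : Ideal A).jacobson) • Submodule.span A {x} :=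
            SetLike.le_def.mp (sup_le_sup_right Submodule.smul_le_right _) h1
          obtain ⟨nn, hnn, y, hy, hsum⟩ := Submodule.mem_sup.mp h2
          obtain ⟨c, hc, rfl⟩ := hform x y hy
          obtain ⟨z, hz⟩ := Ideal.mem_jacobson_iff.mp hc (-1)
          have h0 : z * -1 * c + z - 1 = 0 := by simpa using hz
          have hz' : z * (1 - c) = 1 := by
            calc z * (1 - c) = z * -1 * c + z := by noncomm_ring
              _ = 1 := eq_of_sub_eq_zero h0
          have hx' : x = z • (((1 : A) - c) • x) := by
            rw [smul_smul, hz', one_smul]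
          have h3 : ((1 : A) - c) • x = nn := by
            rw [sub_smul, one_smul]
            exact sub_eq_iff_eq_add.mpr hsum.symm
          rw [hx', h3]
          exact Submodule.smul_mem N z hnn
        have hspan' : N = ⊤ := by
          rw [htop']
          exact (sup_eq_left.mpr
            (Submodule.span_le.mpr (Set.singleton_subset_iff.mpr hxN))).symm
        refine ih (s.erase x) ?_ (by rw [← hN]; exact hspan')
        have := Finset.card_erase_of_mem hx
        omega
  obtain ⟨s, hs⟩ := Module.Finite.fg_top (R := A) (M := M)
  have htop := key s.card s le_rfl hs
  refine subsingleton_of_forall_eq 0 fun x => ?_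
  have : x ∈ (⊥ : Submodule A M) := htop ▸ Submodule.mem_top
  simpa using this

lemma subsingleton_of_isZero {M : ModuleCat.{0} A} (h : IsZero M) : Subsingleton M := by
  have hid : (𝟙 M : M ⟶ M) = 0 := h.eq_of_src _ _
  refine subsingleton_of_forall_eq 0 (fun x => ?_)
  calc x = (𝟙 M : M ⟶ M) x := rfl
    _ = (0 : M ⟶ M) x := by rw [hid]
    _ = 0 := rfl

lemma finite_of_subsingleton {M : Type} [AddCommGroup M] [Module A M] [Subsingleton M] :
    Module.Finite A M := by
  refine ⟨⟨{0}, ?_⟩⟩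
  refine Submodule.eq_top_iff'.mpr (fun x => ?_)
  have : x = 0 := Subsingleton.elim _ _
  rw [this]
  exact Submodule.zero_mem _

/-- The key "minimal complexes have no nonzero contractible retract pieces" lemma. -/
lemma aux_isZero (Q : CochainComplex (ModuleCat.{0} A) ℤ) (m : ℕ)
    (hQfin : ∀ n : ℤ, Module.Finite A (Q.X n))
    (hQzs : ∀ n : ℤ, (n < -(m : ℤ) ∨ 0 < n) → Subsingleton (Q.X n))
    (hker : ∀ n j : ℤ, n + 1 = j → -(m : ℤ) ≤ n → n ≤ -1 → ∀ x : Q.X n,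
      Q.d n j x = 0 → x ∈ radSubmodule A (Q.X n))
    (W : CochainComplex (ModuleCat.{0} A) ℤ)
    (r : W ⟶ Q) (s : Q ⟶ W) (hrs : r ≫ s = 𝟙 W)
    (hq0 : ∀ x : Q.X 0, (s ≫ r).f 0 x ∈ radSubmodule A (Q.X 0)) :
    IsZero W := by
  -- retraction pointwise
  have hsr : ∀ (n : ℤ) (w : W.X n), s.f n (r.f n w) = w := by
    intro n w
    have : (r ≫ s).f n = 𝟙 (W.X n) := by rw [hrs]; rfl
    calc s.f n (r.f n w) = ((r ≫ s).f n) w := rfl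
      _ = (𝟙 (W.X n)) w := by rw [this]
      _ = w := rfl
  have hWfin : ∀ n : ℤ, Module.Finite A (W.X n) := by
    intro n
    have hfinn := hQfin n
    exact Module.Finite.of_surjective (R := A)
      (show (Q.X n : Type) →ₗ[A] (W.X n : Type) from (s.f n).hom)
      (fun w => ⟨r.f n w, hsr n w⟩)
  -- from "q maps into the radical in degree n" conclude W.X n is subsingleton
  have step : ∀ n : ℤ, (∀ x : Q.X n, (s ≫ r).f n x ∈ radSubmodule A (Q.X n)) →
      Subsingleton (W.X n) := by
    intro n hn
    have hWfin' := hWfin n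
    refine subsingleton_of_rad (A := A) (fun w => ?_)
    have h1 : (s ≫ r).f n (r.f n w) = r.f n w := by
      calc (s ≫ r).f n (r.f n w) = r.f n (s.f n (r.f n w)) := rfl
        _ = r.f n w := by rw [hsr]
    have h2 : r.f n w ∈ radSubmodule A (Q.X n) := h1 ▸ hn (r.f n w)
    have h3 := radSubmodule_map (s.f n).hom h2
    rwa [hsr n w] at h3
  -- if W.X n is subsingleton then q vanishes in degree n
  have qzero : ∀ n : ℤ, Subsingleton (W.X n) → ∀ x : Q.X n, (s ≫ r).f n x = 0 := by
    intro n hn x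
    have h1 : s.f n x = 0 := Subsingleton.elim _ _
    calc (s ≫ r).f n x = r.f n (s.f n x) := rfl
      _ = r.f n 0 := by rw [h1]
      _ = 0 := map_zero _
  -- main downward induction
  have key : ∀ n : ℤ, n ≤ 0 → -(m : ℤ) ≤ n → Subsingleton (W.X n) := by
    refine Int.le_induction_down ?_ ?_
    · intro _
      exact step 0 hq0
    · intro n hn ih hm'
      have hWn : Subsingleton (W.X n) := ih (by omega)
      refine step (n - 1) (fun x => ?_)
      have hcomm := (s ≫ r).comm (n - 1) n
      have h1 : Q.d (n - 1) n ((s ≫ r).f (n - 1) x) = (s ≫ r).f n (Q.d (n - 1) n x) := by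
        calc Q.d (n - 1) n ((s ≫ r).f (n - 1) x) = ((s ≫ r).f (n - 1) ≫ Q.d (n - 1) n) x := rfl
          _ = (Q.d (n - 1) n ≫ (s ≫ r).f n) x := by rw [hcomm]
          _ = (s ≫ r).f n (Q.d (n - 1) n x) := rfl
      have h2 : Q.d (n - 1) n ((s ≫ r).f (n - 1) x) = 0 := by
        rw [h1, qzero n hWn]
      exact hker (n - 1) n (by omega) (by omega) (by omega) _ h2
  -- conclude
  have hWsub : ∀ n : ℤ, Subsingleton (W.X n) := by
    intro n
    by_cases h1 : n ≤ 0 ∧ -(m : ℤ) ≤ n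
    · exact key n h1.1 h1.2
    · have hq : Subsingleton (Q.X n) := hQzs n (by omega)
      refine subsingleton_of_forall_eq 0 (fun w => ?_)
      have : r.f n w = r.f n 0 := by
        have : (r.f n w : Q.X n) = r.f n 0 := Subsingleton.elim _ _
        exact this
      calc w = s.f n (r.f n w) := (hsr n w).symm
        _ = s.f n (r.f n 0) := by rw [this]
        _ = (0 : W.X n) := by rw [hsr n 0]
  rw [IsZero.iff_id_eq_zero]
  apply HomologicalComplex.hom_ext
  intro i
  have := hWsub i
  exact (ModuleCat.isZero_of_subsingleton (W.X i)).eq_of_src _ _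

end Helpers

theorem stmt_18 (k : Type) [Field k] (A : Type) [Ring A] [Algebra k A]
    [FiniteDimensional k A]
    (M : ModuleCat.{0} A) [Module.Finite A M]
    (hM : ¬ IsZero M)
    (hMindec : ∀ N N' : ModuleCat.{0} A, Nonempty (M ≅ N ⊞ N') → IsZero N ∨ IsZero N')
    (P : CochainComplex (ModuleCat.{0} A) ℤ)
    (hproj : ∀ n : ℤ, Module.Projective A (P.X n))
    (hfin : ∀ n : ℤ, Module.Finite A (P.X n))
    (hsupp : ∀ n : ℤ, 0 < n → IsZero (P.X n))
    (ε : P.X 0 ⟶ M) (hε : Function.Surjective ε)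
    (hex0 : LinearMap.range (P.d (-1) 0).hom = LinearMap.ker ε.hom)
    (hex : ∀ n : ℤ, n < 0 → LinearMap.range (P.d (n - 1) n).hom = LinearMap.ker (P.d n (n + 1)).hom)
    (hmin : ∀ n : ℤ, ∀ x : P.X n, P.d n (n + 1) x ∈ radSubmodule A (P.X (n + 1)))
    (m : ℕ) (hm : 1 ≤ m)
    -- `Q` is the brutal truncation `τ^{≥ -m} P•`:
    (Q : CochainComplex (ModuleCat.{0} A) ℤ)
    (hQz : ∀ n : ℤ, (n < -(m : ℤ) ∨ 0 < n) → IsZero (Q.X n))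
    (φ : ∀ n : ℤ, -(m : ℤ) ≤ n → n ≤ 0 → (Q.X n ≅ P.X n))
    (hφ : ∀ n : ℤ, ∀ (h₁ : -(m : ℤ) ≤ n) (h₂ : n + 1 ≤ 0),
      (φ n h₁ (by omega)).hom ≫ P.d n (n + 1) =
        Q.d n (n + 1) ≫ (φ (n + 1) (by omega) h₂).hom) :
    (∀ n : ℤ, ∀ x : Q.X n, Q.d n (n + 1) x ∈ radSubmodule A (Q.X (n + 1))) ∧
    (∀ U V : CochainComplex (ModuleCat.{0} A) ℤ,
      Nonempty (Q ≅ U ⊞ V) → IsZero U ∨ IsZero V) := by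
  have hQzs : ∀ n : ℤ, (n < -(m : ℤ) ∨ 0 < n) → Subsingleton (Q.X n) :=
    fun n h => subsingleton_of_isZero (hQz n h)
  -- iso cancellation helpers
  have hinvhom : ∀ (X Y : ModuleCat.{0} A) (ψ : X ≅ Y) (x : X), ψ.inv (ψ.hom x) = x := by
    intro X Y ψ x
    calc ψ.inv (ψ.hom x) = (ψ.hom ≫ ψ.inv) x := rfl
      _ = (𝟙 X) x := by rw [ψ.hom_inv_id]
      _ = x := rfl
  have hhominv : ∀ (X Y : ModuleCat.{0} A) (ψ : X ≅ Y) (y : Y), ψ.hom (ψ.inv y) = y := by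
    intro X Y ψ y
    calc ψ.hom (ψ.inv y) = (ψ.inv ≫ ψ.hom) y := rfl
      _ = (𝟙 Y) y := by rw [ψ.inv_hom_id]
      _ = y := rfl
  -- pointwise version of hφ with a free upper index
  have hφ' : ∀ (n j : ℤ), n + 1 = j → ∀ (h₁ : -(m : ℤ) ≤ n) (h₂ : j ≤ 0)
      (h₁' : -(m : ℤ) ≤ j) (h₂' : n ≤ 0) (x : Q.X n),
      (φ j h₁' h₂).hom (Q.d n j x) = P.d n j ((φ n h₁ h₂').hom x) := by
    intro n j hj
    subst hj
    intro h₁ h₂ h₁' h₂' x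
    exact congrArg (fun t : Q.X n ⟶ P.X (n + 1) => t x) (hφ n h₁ h₂).symm
  -- pointwise version of hmin with a free upper index
  have hmin' : ∀ (n j : ℤ), n + 1 = j → ∀ x : P.X n, P.d n j x ∈ radSubmodule A (P.X j) := by
    intro n j hj
    subst hj
    exact hmin n
  -- Part 1, with a free upper index
  have hrad' : ∀ (n j : ℤ), n + 1 = j → ∀ x : Q.X n,
      Q.d n j x ∈ radSubmodule A (Q.X j) := by
    intro n j hj x
    by_cases h1 : n < -(m : ℤ)
    · have := hQzs n (Or.inl h1)
      have hx : x = 0 := Subsingleton.elim _ _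
      rw [hx, map_zero]
      exact Submodule.zero_mem _
    · by_cases h2 : 0 ≤ n
      · have := hQzs j (Or.inr (by omega))
        have hx : Q.d n j x = 0 := Subsingleton.elim _ _
        rw [hx]
        exact Submodule.zero_mem _
      · -- -m ≤ n ≤ -1
        have h₁ : -(m : ℤ) ≤ n := by omega
        have h₂ : j ≤ 0 := by omega
        have h3 := hφ' n j hj h₁ h₂ (by omega) (by omega) x
        have h4 : P.d n j ((φ n h₁ (by omega)).hom x) ∈ radSubmodule A (P.X j) :=
          hmin' n j hj _
        rw [← h3] at h4
        have h5 := radSubmodule_map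
          (φ j (by omega) h₂).inv.hom h4
        rwa [hinvhom _ _ (φ j (by omega) h₂) (Q.d n j x)] at h5
  refine ⟨fun n x => hrad' n (n + 1) rfl x, ?_⟩
  -- kernels of differentials in strictly negative degrees land in the radical
  have hker : ∀ n j : ℤ, n + 1 = j → -(m : ℤ) ≤ n → n ≤ -1 → ∀ x : Q.X n,
      Q.d n j x = 0 → x ∈ radSubmodule A (Q.X n) := by
    intro n j hj h₁ h₂ x hx
    have hn0 : n ≤ 0 := by omega
    have hj0 : j ≤ 0 := by omega
    have h3 := hφ' n j hj h₁ hj0 (by omega) (by omega) x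
    rw [hx, map_zero] at h3
    -- (φ n).hom x ∈ ker (P.d n j) = ker (P.d n (n+1))
    subst hj
    have h4 : (φ n h₁ hn0).hom x ∈ LinearMap.ker (P.d n (n + 1)).hom :=
      LinearMap.mem_ker.mpr h3.symm
    rw [← hex n (by omega)] at h4
    obtain ⟨y, hy⟩ := h4
    have h5 : P.d (n - 1) n y ∈ radSubmodule A (P.X n) := hmin' (n - 1) n (by omega) y
    rw [hy] at h5
    have h6 := radSubmodule_map (φ n h₁ hn0).inv.hom h5
    rwa [hinvhom _ _ (φ n h₁ hn0) x] at h6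
  -- finiteness of the Q components
  have hQfin : ∀ n : ℤ, Module.Finite A (Q.X n) := by
    intro n
    by_cases h1 : -(m : ℤ) ≤ n ∧ n ≤ 0
    · have hfinn := hfin n
      exact Module.Finite.of_surjective (R := A)
        (show (P.X n : Type) →ₗ[A] (Q.X n : Type) from (φ n h1.1 h1.2).inv.hom)
        (fun x => ⟨(φ n h1.1 h1.2).hom x, hinvhom _ _ (φ n h1.1 h1.2) x⟩)
    · have := hQzs n (by omega)
      exact finite_of_subsingleton
  -- the augmentation for Q
  intro U V hUV
  obtain ⟨e⟩ := hUV
  have hm0 : -(m : ℤ) ≤ 0 := by omega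
  set θ : Q.X 0 ⟶ M := (φ 0 hm0 le_rfl).hom ≫ ε with hθdef
  have hθsurj : Function.Surjective θ := by
    intro y
    obtain ⟨x, hx⟩ := hε y
    exact ⟨(φ 0 hm0 le_rfl).inv x, by
      show ε ((φ 0 hm0 le_rfl).hom ((φ 0 hm0 le_rfl).inv x)) = y
      rw [hhominv _ _ (φ 0 hm0 le_rfl) x, hx]⟩
  have hθd : ∀ z : Q.X (-1), θ (Q.d (-1) 0 z) = 0 := by
    intro z
    have h1 := hφ' (-1) 0 (by norm_num) (by omega) le_rfl (by omega) (by omega) z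
    show ε ((φ 0 hm0 le_rfl).hom (Q.d (-1) 0 z)) = 0
    rw [h1]
    have h2 : P.d (-1) 0 ((φ (-1) (by omega) (by omega)).hom z) ∈ LinearMap.ker ε.hom := by
      rw [← hex0]
      exact ⟨_, rfl⟩
    exact h2
  have hθker : ∀ x : Q.X 0, θ x = 0 → ∃ z : Q.X (-1), Q.d (-1) 0 z = x := by
    intro x hx
    have h1 : (φ 0 hm0 le_rfl).hom x ∈ LinearMap.ker ε.hom := hx
    rw [← hex0] at h1
    obtain ⟨y, hy⟩ := h1
    refine ⟨(φ (-1) (by omega) (by omega)).inv y, ?_⟩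
    have h2 := hφ' (-1) 0 (by norm_num) (by omega) le_rfl (by omega) (by omega)
      ((φ (-1) (by omega) (by omega)).inv y)
    rw [hhominv _ _ (φ (-1) (by omega) (by omega)) y, hy] at h2
    have h3 : (φ 0 hm0 le_rfl).inv ((φ 0 hm0 le_rfl).hom
        (Q.d (-1) 0 ((φ (-1) (by omega) (by omega)).inv y))) =
        (φ 0 hm0 le_rfl).inv ((φ 0 hm0 le_rfl).hom x) := by rw [h2]
    rwa [hinvhom, hinvhom] at h3
  -- images of Q.d (-1) 0 lie in the radical
  have hdrad : ∀ z : Q.X (-1), Q.d (-1) 0 z ∈ radSubmodule A (Q.X 0) :=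
    fun z => hrad' (-1) 0 (by norm_num) z
  -- set up the retractions
  set sU : Q ⟶ U := e.hom ≫ biprod.fst with hsU
  set rU : U ⟶ Q := biprod.inl ≫ e.inv with hrU
  set sV : Q ⟶ V := e.hom ≫ biprod.snd with hsV
  set rV : V ⟶ Q := biprod.inr ≫ e.inv with hrV
  have hUU : rU ≫ sU = 𝟙 U := by
    rw [hrU, hsU, Category.assoc, Iso.inv_hom_id_assoc, biprod.inl_fst]
  have hVV : rV ≫ sV = 𝟙 V := by
    rw [hrV, hsV, Category.assoc, Iso.inv_hom_id_assoc, biprod.inr_snd]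
  have hUV0 : rU ≫ sV = 0 := by
    rw [hrU, hsV, Category.assoc, Iso.inv_hom_id_assoc, biprod.inl_snd]
  have hVU0 : rV ≫ sU = 0 := by
    rw [hrV, hsU, Category.assoc, Iso.inv_hom_id_assoc, biprod.inr_fst]
  have htot : sU ≫ rU + sV ≫ rV = 𝟙 Q := by
    rw [hsU, hrU, hsV, hrV]
    calc (e.hom ≫ biprod.fst) ≫ biprod.inl ≫ e.inv +
          (e.hom ≫ biprod.snd) ≫ biprod.inr ≫ e.inv
        = e.hom ≫ (biprod.fst ≫ biprod.inl + biprod.snd ≫ biprod.inr) ≫ e.inv := by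
          simp only [Preadditive.comp_add, Preadditive.add_comp, Category.assoc]
      _ = e.hom ≫ 𝟙 _ ≫ e.inv := by rw [biprod.total]
      _ = 𝟙 Q := by rw [Category.id_comp, e.hom_inv_id]
  -- idempotent identities, degree 0, pointwise
  have hqq : ∀ (s' : Q ⟶ U) (r' : U ⟶ Q), True → True := fun _ _ _ => trivial
  have hUUpt : ∀ x : Q.X 0, (sU ≫ rU).f 0 ((sU ≫ rU).f 0 x) = (sU ≫ rU).f 0 x := by
    intro x
    have h : (sU ≫ rU) ≫ (sU ≫ rU) = sU ≫ rU := by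
      calc (sU ≫ rU) ≫ sU ≫ rU = sU ≫ (rU ≫ sU) ≫ rU := by simp only [Category.assoc]
        _ = sU ≫ rU := by rw [hUU, Category.id_comp]
    calc (sU ≫ rU).f 0 ((sU ≫ rU).f 0 x) = ((sU ≫ rU) ≫ (sU ≫ rU)).f 0 x := rfl
      _ = (sU ≫ rU).f 0 x := by rw [h]
  have hUVpt : ∀ x : Q.X 0, (sU ≫ rU).f 0 ((sV ≫ rV).f 0 x) = 0 := by
    intro x
    have h : (sV ≫ rV) ≫ (sU ≫ rU) = 0 := by
      calc (sV ≫ rV) ≫ sU ≫ rU = sV ≫ (rV ≫ sU) ≫ rU := by simp only [Category.assoc]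
        _ = 0 := by rw [hVU0]; simp
    calc (sU ≫ rU).f 0 ((sV ≫ rV).f 0 x) = ((sV ≫ rV) ≫ (sU ≫ rU)).f 0 x := rfl
      _ = (0 : Q ⟶ Q).f 0 x := by rw [h]
      _ = 0 := rfl
  have hVUpt : ∀ x : Q.X 0, (sV ≫ rV).f 0 ((sU ≫ rU).f 0 x) = 0 := by
    intro x
    have h : (sU ≫ rU) ≫ (sV ≫ rV) = 0 := by
      calc (sU ≫ rU) ≫ sV ≫ rV = sU ≫ (rU ≫ sV) ≫ rV := by simp only [Category.assoc]
        _ = 0 := by rw [hUV0]; simp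
    calc (sV ≫ rV).f 0 ((sU ≫ rU).f 0 x) = ((sU ≫ rU) ≫ (sV ≫ rV)).f 0 x := rfl
      _ = (0 : Q ⟶ Q).f 0 x := by rw [h]
      _ = 0 := rfl
  have htotpt : ∀ x : Q.X 0, (sU ≫ rU).f 0 x + (sV ≫ rV).f 0 x = x := by
    intro x
    have h1 : (sU ≫ rU).f 0 + (sV ≫ rV).f 0 = HomologicalComplex.Hom.f (𝟙 Q) 0 := by
      rw [← HomologicalComplex.add_f_apply, htot]
    calc (sU ≫ rU).f 0 x + (sV ≫ rV).f 0 x = ((sU ≫ rU).f 0 + (sV ≫ rV).f 0) x := rfl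
      _ = HomologicalComplex.Hom.f (𝟙 Q) 0 x := by rw [h1]
      _ = x := by rw [HomologicalComplex.id_f]; rfl
  -- each idempotent commutes with d through degree -1
  have hcommQ : ∀ (q : Q ⟶ Q) (z : Q.X (-1)),
      q.f 0 (Q.d (-1) 0 z) = Q.d (-1) 0 (q.f (-1) z) := by
    intro q z
    have h := q.comm (-1) 0
    calc q.f 0 (Q.d (-1) 0 z) = (Q.d (-1) 0 ≫ q.f 0) z := rfl
      _ = (q.f (-1) ≫ Q.d (-1) 0) z := by rw [h]
      _ = Q.d (-1) 0 (q.f (-1) z) := rfl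
  -- the two pieces of M
  set Nu : Submodule A M := LinearMap.range ((sU ≫ rU).f 0 ≫ θ).hom with hNu
  set Nv : Submodule A M := LinearMap.range ((sV ≫ rV).f 0 ≫ θ).hom with hNv
  -- a general disjointness argument
  have hdisj : ∀ (qa qb : Q ⟶ Q),
      (∀ x, qa.f 0 (qa.f 0 x) = qa.f 0 x) → (∀ x, qa.f 0 (qb.f 0 x) = 0) →
      ∀ y : M, y ∈ LinearMap.range (qa.f 0 ≫ θ).hom → y ∈ LinearMap.range (qb.f 0 ≫ θ).hom →
      y = 0 := by
    intro qa qb hidem hzero y hya hyb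
    obtain ⟨a, ha⟩ := hya
    obtain ⟨b, hb⟩ := hyb
    have ha' : θ (qa.f 0 a) = y := ha
    have hb' : θ (qb.f 0 b) = y := hb
    have h1 : θ (qa.f 0 a - qb.f 0 b) = 0 := by
      rw [map_sub, ha', hb', sub_self]
    obtain ⟨z, hz⟩ := hθker _ h1
    have h2 : qa.f 0 (qa.f 0 a - qb.f 0 b) = qa.f 0 (Q.d (-1) 0 z) := by rw [hz]
    rw [map_sub, hidem, hzero, sub_zero, hcommQ qa z] at h2
    rw [← ha', h2, hθd]
  have hcompl : IsCompl Nu Nv := by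
    constructor
    · rw [disjoint_iff]
      refine Submodule.eq_bot_iff _ |>.mpr (fun y hy => ?_)
      obtain ⟨hyu, hyv⟩ := Submodule.mem_inf.mp hy
      exact hdisj (sU ≫ rU) (sV ≫ rV) hUUpt hUVpt y hyu hyv
    · rw [codisjoint_iff]
      refine eq_top_iff.mpr (fun y _ => ?_)
      obtain ⟨x, hx⟩ := hθsurj y
      have : y = θ ((sU ≫ rU).f 0 x) + θ ((sV ≫ rV).f 0 x) := by
        rw [← map_add, htotpt, hx]
      rw [this]
      exact Submodule.add_mem_sup ⟨x, rfl⟩ ⟨x, rfl⟩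
  -- the biproduct decomposition of M
  have hMiso : Nonempty (M ≅ ModuleCat.of A Nu ⊞ ModuleCat.of A Nv) := by
    refine ⟨?_⟩
    refine ?_ ≪≫ (ModuleCat.biprodIsoProd (ModuleCat.of A Nu) (ModuleCat.of A Nv)).symm
    exact (Submodule.prodEquivOfIsCompl Nu Nv hcompl).symm.toModuleIso
  -- apply indecomposability of M
  rcases hMindec _ _ hMiso with hz | hz
  · -- Nu is zero: U is zero
    left
    have hsub : Subsingleton Nu := subsingleton_of_isZero hz
    have hθq0 : ∀ x : Q.X 0, θ ((sU ≫ rU).f 0 x) = 0 := by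
      intro x
      have h1 : (⟨θ ((sU ≫ rU).f 0 x), ⟨x, rfl⟩⟩ : Nu) = ⟨0, Submodule.zero_mem _⟩ :=
        Subsingleton.elim _ _
      exact congrArg Subtype.val h1
    refine aux_isZero Q m hQfin hQzs hker U rU sU hUU (fun x => ?_)
    obtain ⟨z, hz'⟩ := hθker _ (hθq0 x)
    rw [← hz']
    exact hdrad z
  · -- Nv is zero: V is zero
    right
    have hsub : Subsingleton Nv := subsingleton_of_isZero hz
    have hθq0 : ∀ x : Q.X 0, θ ((sV ≫ rV).f 0 x) = 0 := by
      intro x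
      have h1 : (⟨θ ((sV ≫ rV).f 0 x), ⟨x, rfl⟩⟩ : Nv) = ⟨0, Submodule.zero_mem _⟩ :=
        Subsingleton.elim _ _
      exact congrArg Subtype.val h1
    refine aux_isZero Q m hQfin hQzs hker V rV sV hVV (fun x => ?_)
    obtain ⟨z, hz'⟩ := hθker _ (hθq0 x)
    rw [← hz']
    exact hdrad z
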